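/- Let M > 0, Λ > 0, Q ∈ ℝ and define f(r) = 1 - 2M/r + Q²/r² - Λr²/3. If f has a triple root at some r₀ > 0 (i.e. f(r₀) = f'(r₀) = f''(r₀) = 0), then r₀ = 1/√(2Λ), Λ M² = 2/9, and Q² = (9/8)M², i.e. |Q| = 3M/(2√2) ≈ 1.06·M. -/

import Mathlib

theorem stmt_8 (M Λ Q r₀ : ℝ) (hM : 0 < M) (hΛ : 0 < Λ)
    (f : ℝ → ℝ) (hf : ∀ r : ℝ, f r = 1 - 2*M/r + Q^2/r^2 - Λ*r^2/3)
    (hr₀ : 0 < r₀)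
    (h0 : f r₀ = 0) (h1 : deriv f r₀ = 0) (h2 : deriv (deriv f) r₀ = 0) :
    r₀ = 1 / Real.sqrt (2*Λ) ∧ Λ * M^2 = 2/9 ∧ Q^2 = 9/8 * M^2 := by
  have hfun : f = fun r => 1 - 2*M/r + Q^2/r^2 - Λ*r^2/3 := funext hf
  subst hfun
  set F' : ℝ → ℝ := fun r => 2*M/r^2 - 2*Q^2/r^3 - 2*Λ*r/3 with hF'
  set F'' : ℝ → ℝ := fun r => -4*M/r^3 + 6*Q^2/r^4 - 2*Λ/3 with hF''
  have hd : ∀ r : ℝ, r ≠ 0 →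
      HasDerivAt (fun r => 1 - 2*M/r + Q^2/r^2 - Λ*r^2/3) (F' r) r := by
    intro r hr
    have h1 : HasDerivAt (fun r : ℝ => r⁻¹) (-(r^2)⁻¹) r := hasDerivAt_inv hr
    have h2 : HasDerivAt (fun r : ℝ => r^2) (2*r) r := by
      simpa using hasDerivAt_pow 2 r
    have h3 : HasDerivAt (fun r : ℝ => (r^2)⁻¹) (-(2*r) / (r^2)^2) r :=
      h2.inv (pow_ne_zero 2 hr)
    have key : HasDerivAt
        (fun r : ℝ => 1 - 2*M/r + Q^2/r^2 - Λ*r^2/3)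
        (0 - 2*M*(-(r^2)⁻¹) + Q^2*(-(2*r)/(r^2)^2) - Λ*(2*r)/3) r := by
      simp only [div_eq_mul_inv]
      exact (((hasDerivAt_const r (1:ℝ)).sub (h1.const_mul (2*M))).add
        (h3.const_mul (Q^2))).sub (((h2.const_mul Λ).mul_const (3:ℝ)⁻¹))
    convert key using 1
    simp only [hF']
    field_simp
    ring
  have hd' : ∀ r : ℝ, r ≠ 0 → HasDerivAt F' (F'' r) r := by
    intro r hr
    have h2 : HasDerivAt (fun r : ℝ => r^2) (2*r) r := by
      simpa using hasDerivAt_pow 2 r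
    have h3c : HasDerivAt (fun r : ℝ => r^3) (3*r^2) r := by
      simpa using hasDerivAt_pow 3 r
    have hi2 : HasDerivAt (fun r : ℝ => (r^2)⁻¹) (-(2*r) / (r^2)^2) r :=
      h2.inv (pow_ne_zero 2 hr)
    have hi3 : HasDerivAt (fun r : ℝ => (r^3)⁻¹) (-(3*r^2) / (r^3)^2) r :=
      h3c.inv (pow_ne_zero 3 hr)
    have key : HasDerivAt F'
        (2*M*(-(2*r)/(r^2)^2) - 2*Q^2*(-(3*r^2)/(r^3)^2) - 2*Λ*(1)/3) r := by
      simp only [hF', div_eq_mul_inv]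
      exact ((hi2.const_mul (2*M)).sub (hi3.const_mul (2*Q^2))).sub
        (((hasDerivAt_id r).const_mul (2*Λ)).mul_const (3:ℝ)⁻¹)
    convert key using 1
    simp only [hF'']
    field_simp
    ring
  have hr0 : r₀ ≠ 0 := hr₀.ne'
  -- deriv f = F' at r₀ and eventually
  have hdf : deriv (fun r => 1 - 2*M/r + Q^2/r^2 - Λ*r^2/3) r₀ = F' r₀ :=
    (hd r₀ hr0).deriv
  have hev : deriv (fun r => 1 - 2*M/r + Q^2/r^2 - Λ*r^2/3) =ᶠ[nhds r₀] F' := by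
    filter_upwards [eventually_ne_nhds hr0] with x hx using (hd x hx).deriv
  have e1 : F' r₀ = 0 := by rw [← hdf]; exact h1
  have e2 : F'' r₀ = 0 := by
    have := hev.deriv_eq
    rw [← (hd' r₀ hr0).deriv, ← this]
    exact h2
  -- algebra
  have e0 : 1 - 2*M/r₀ + Q^2/r₀^2 - Λ*r₀^2/3 = 0 := h0
  have eqA : r₀^2 - 2*M*r₀ + Q^2 - Λ*r₀^4/3 = 0 := by
    field_simp at e0; nlinarith [e0, sq_nonneg r₀]
  have eqB : M*r₀ - Q^2 - Λ*r₀^4/3 = 0 := by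
    have h : 2*M/r₀^2 - 2*Q^2/r₀^3 - 2*Λ*r₀/3 = 0 := e1
    field_simp at h
    have h' : (M*r₀ - Q^2 - Λ*r₀^4/3) * (6*r₀^2) = 0 := by linear_combination r₀^2 * h
    rcases mul_eq_zero.mp h' with h'' | h''
    · exact h''
    · exact absurd h'' (by positivity)
  have eqC : -2*M*r₀ + 3*Q^2 - Λ*r₀^4/3 = 0 := by
    have h : -4*M/r₀^3 + 6*Q^2/r₀^4 - 2*Λ/3 = 0 := e2
    field_simp at h
    have h' : (-2*M*r₀ + 3*Q^2 - Λ*r₀^4/3) * (6*r₀^3) = 0 := by linear_combination r₀^3 * h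
    rcases mul_eq_zero.mp h' with h'' | h''
    · exact h''
    · exact absurd h'' (by positivity)
  have h34 : 3*M*r₀ = 4*Q^2 := by linarith
  have hrr : r₀ * r₀ = r₀ * (3*M/2) := by linear_combination eqA - eqB + (1/2) * h34
  have hr3 : r₀ = 3*M/2 := mul_left_cancel₀ hr0 hrr
  subst hr3
  have hQ : Q^2 = 9/8 * M^2 := by linear_combination (-1/4) * h34
  have hLM : Λ * M^2 = 2/9 := by
    have hM2 : (0:ℝ) < M^2 := by positivity
    have hz : (Λ * M^2 - 2/9) * M^2 = 0 := by
      linear_combination (-16/27) * eqB + (-16/27) * hQ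
    rcases mul_eq_zero.mp hz with h | h
    · linarith
    · exact absurd h hM2.ne'
  refine ⟨?_, hLM, hQ⟩
  have hs : Real.sqrt (2*Λ) = 2/(3*M) := by
    rw [show 2*Λ = (2/(3*M))^2 by field_simp; linear_combination 9 * hLM]
    exact Real.sqrt_sq (by positivity)
  rw [hs]
  field_simp
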